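/- Let λ ∈ ℝ with λ ∉ 𝒩 and let μ ∈ ℂ. Suppose φ : [0,1] → ℂ is four times continuously differentiable and satisfies φ''''(x) + λ φ''(x) = μ φ(x) for all x ∈ [0,1], together with the five boundary conditions φ(0) = φ(1) = φ'(0) = φ''(0) = φ''(1) = 0. Then φ is identically zero. -/

import Mathlib

open Real Set

noncomputable def Sf (ω : ℂ) (x : ℝ) : ℂ := (Complex.exp (ω * x) - Complex.exp (-ω * x)) / (2 * ω)
noncomputable def Cf (ω : ℂ) (x : ℝ) : ℂ := (Complex.exp (ω * x) + Complex.exp (-ω * x)) / 2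

lemma hasDerivAt_ofReal' (x : ℝ) : HasDerivAt (fun y : ℝ => (y : ℂ)) 1 x := by
  have := Complex.ofRealCLM.hasDerivAt (x := x); exact this

lemma hasDerivAt_cexp_mul (ω : ℂ) (x : ℝ) :
    HasDerivAt (fun y : ℝ => Complex.exp (ω * y)) (ω * Complex.exp (ω * x)) x := by
  have h := ((hasDerivAt_ofReal' x).const_mul ω).cexp
  simpa [mul_comm] using h

lemma hasDerivAt_Sf {ω : ℂ} (hω : ω ≠ 0) (x : ℝ) :
    HasDerivAt (Sf ω) (Cf ω x) x := by
  have h := ((hasDerivAt_cexp_mul ω x).sub (hasDerivAt_cexp_mul (-ω) x)).div_const (2 * ω)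
  convert h using 1
  · rfl
  · rfl
  unfold Cf
  field_simp
  ring

lemma hasDerivAt_Cf (ω : ℂ) (x : ℝ) :
    HasDerivAt (Cf ω) (ω ^ 2 * Sf ω x) x := by
  have h := ((hasDerivAt_cexp_mul ω x).add (hasDerivAt_cexp_mul (-ω) x)).div_const 2
  convert h using 1
  · rfl
  · rfl
  unfold Sf
  by_cases hω : ω = 0
  · simp [hω]
  · field_simp
    ring

lemma Sf_zero (ω : ℂ) : Sf ω 0 = 0 := by simp [Sf]
lemma Cf_zero (ω : ℂ) : Cf ω 0 = 1 := by norm_num [Cf]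

lemma Sf_one_eq_zero {ω : ℂ} (hω : ω ≠ 0) (h : Sf ω 1 = 0) :
    ∃ n : ℕ+, ω ^ 2 = -(n : ℂ) ^ 2 * (π : ℂ) ^ 2 := by
  have hexp : Complex.exp (ω * 1) - Complex.exp (-ω * 1) = 0 := by
    have h2 : (2 : ℂ) * ω ≠ 0 := by simp [hω]
    simp [Sf, hω] at h
    simpa [sub_eq_zero] using h
  rw [sub_eq_zero, Complex.exp_eq_exp_iff_exp_sub_eq_one] at hexp
  have heq : ω * 1 - -ω * 1 = 2 * ω := by ring
  rw [heq, Complex.exp_eq_one_iff] at hexp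
  obtain ⟨n, hn⟩ := hexp
  have hω' : ω = n * π * Complex.I := by
    linear_combination hn / 2
  have hn0 : n ≠ 0 := by
    rintro rfl
    apply hω
    rw [hω']
    simp
  have habs : ((n.natAbs : ℂ)) ^ 2 = (n : ℂ) ^ 2 := by
    have h1 : ((n.natAbs : ℤ) : ℂ) ^ 2 = ((n:ℤ) : ℂ) ^ 2 := by
      rw [← Int.cast_pow, ← Int.cast_pow, Int.natAbs_sq]
    rw [← h1, Int.cast_natCast]
  refine ⟨⟨n.natAbs, Int.natAbs_pos.mpr hn0⟩, ?_⟩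
  have hI : Complex.I ^ 2 = -1 := Complex.I_sq
  have : ω ^ 2 = -(n : ℂ) ^ 2 * (π : ℂ) ^ 2 := by
    rw [hω']
    linear_combination ((n:ℂ)^2*(π:ℂ)^2) * hI
  rw [this, ← habs]
  norm_num

lemma uniq4 (lam mu : ℂ) {f0 f1 f2 f3 g0 g1 g2 g3 : ℝ → ℂ}
    (hf0 : ∀ x ∈ Icc (0:ℝ) 1, HasDerivWithinAt f0 (f1 x) (Icc 0 1) x)
    (hf1 : ∀ x ∈ Icc (0:ℝ) 1, HasDerivWithinAt f1 (f2 x) (Icc 0 1) x)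
    (hf2 : ∀ x ∈ Icc (0:ℝ) 1, HasDerivWithinAt f2 (f3 x) (Icc 0 1) x)
    (hf3 : ∀ x ∈ Icc (0:ℝ) 1, HasDerivWithinAt f3 (mu * f0 x - lam * f2 x) (Icc 0 1) x)
    (hg0 : ∀ x, HasDerivAt g0 (g1 x) x)
    (hg1 : ∀ x, HasDerivAt g1 (g2 x) x)
    (hg2 : ∀ x, HasDerivAt g2 (g3 x) x)
    (hg3 : ∀ x, HasDerivAt g3 (mu * g0 x - lam * g2 x) x)
    (e0 : f0 0 = g0 0) (e1 : f1 0 = g1 0) (e2 : f2 0 = g2 0) (e3 : f3 0 = g3 0) :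
    ∀ x ∈ Icc (0:ℝ) 1, f0 x = g0 x ∧ f2 x = g2 x := by
  classical
  let c1 : ℂ × ℂ × ℂ × ℂ →L[ℂ] ℂ := ContinuousLinearMap.fst ℂ ℂ (ℂ × ℂ × ℂ)
  let r1 : ℂ × ℂ × ℂ × ℂ →L[ℂ] ℂ × ℂ × ℂ := ContinuousLinearMap.snd ℂ ℂ (ℂ × ℂ × ℂ)
  let c2 : ℂ × ℂ × ℂ × ℂ →L[ℂ] ℂ := (ContinuousLinearMap.fst ℂ ℂ (ℂ × ℂ)).comp r1
  let r2 : ℂ × ℂ × ℂ × ℂ →L[ℂ] ℂ × ℂ := (ContinuousLinearMap.snd ℂ ℂ (ℂ × ℂ)).comp r1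
  let c3 : ℂ × ℂ × ℂ × ℂ →L[ℂ] ℂ := (ContinuousLinearMap.fst ℂ ℂ ℂ).comp r2
  let c4 : ℂ × ℂ × ℂ × ℂ →L[ℂ] ℂ := (ContinuousLinearMap.snd ℂ ℂ ℂ).comp r2
  let L : ℂ × ℂ × ℂ × ℂ →L[ℂ] ℂ × ℂ × ℂ × ℂ := c2.prod (c3.prod (c4.prod (mu • c1 - lam • c3)))
  have hLapp : ∀ y : ℂ × ℂ × ℂ × ℂ, L y = (y.2.1, y.2.2.1, y.2.2.2, mu * y.1 - lam * y.2.2.1) := by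
    intro y
    simp [L, c1, c2, c3, c4, r1, r2]
  let F : ℝ → ℂ × ℂ × ℂ × ℂ := fun x => (f0 x, f1 x, f2 x, f3 x)
  let G : ℝ → ℂ × ℂ × ℂ × ℂ := fun x => (g0 x, g1 x, g2 x, g3 x)
  have hF' : ∀ x ∈ Icc (0:ℝ) 1, HasDerivWithinAt F (L (F x)) (Icc 0 1) x := by
    intro x hx
    rw [hLapp]
    exact (hf0 x hx).prodMk ((hf1 x hx).prodMk ((hf2 x hx).prodMk (hf3 x hx)))
  have hG' : ∀ x, HasDerivAt G (L (G x)) x := by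
    intro x
    rw [hLapp]
    exact (hg0 x).prodMk ((hg1 x).prodMk ((hg2 x).prodMk (hg3 x)))
  have hmem : ∀ t ∈ Ico (0:ℝ) 1, Icc (0:ℝ) 1 ∈ nhdsWithin t (Ici t) := by
    intro t ht
    rw [mem_nhdsWithin]
    exact ⟨Iio 1, isOpen_Iio, ht.2, fun y hy => ⟨ht.1.trans hy.2, hy.1.le⟩⟩
  have key : EqOn F G (Icc 0 1) := by
    apply ODE_solution_unique (v := fun _ y => L y) (fun _ => L.lipschitz)
    · exact fun x hx => (hF' x hx).continuousWithinAt
    · intro t ht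
      exact (hF' t (Ico_subset_Icc_self ht)).mono_of_mem_nhdsWithin (hmem t ht)
    · exact fun x hx => (hG' x).continuousAt.continuousWithinAt
    · intro t ht
      exact (hG' t).hasDerivWithinAt
    · show F 0 = G 0
      simp only [F, G, e0, e1, e2, e3]
  intro x hx
  have h := key hx
  exact ⟨congrArg (fun p : ℂ × ℂ × ℂ × ℂ => p.1) h,
    congrArg (fun p : ℂ × ℂ × ℂ × ℂ => p.2.2.1) h⟩


/-- If λ ∉ 𝒩 := {j²π² + k²π² : j ≠ k positive integers}, μ ∈ ℂ, and φ : [0,1] → ℂ is a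
C⁴ solution of φ'''' + λφ'' = μφ with the five boundary conditions
φ(0) = φ(1) = φ'(0) = φ''(0) = φ''(1) = 0, then φ ≡ 0. -/
theorem stmt2 (lam : ℝ)
    (hlam : lam ∉ {x : ℝ | ∃ j k : ℕ+, j ≠ k ∧
      x = (j : ℝ) ^ 2 * π ^ 2 + (k : ℝ) ^ 2 * π ^ 2})
    (mu : ℂ) (φ : ℝ → ℂ)
    (hφ : ContDiffOn ℝ 4 φ (Icc 0 1))
    (hode : ∀ x ∈ Icc (0 : ℝ) 1,
      iteratedDerivWithin 4 φ (Icc 0 1) x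
        + (lam : ℂ) * iteratedDerivWithin 2 φ (Icc 0 1) x = mu * φ x)
    (h0 : φ 0 = 0) (h1 : φ 1 = 0)
    (h0' : derivWithin φ (Icc 0 1) 0 = 0)
    (h0'' : iteratedDerivWithin 2 φ (Icc 0 1) 0 = 0)
    (h1'' : iteratedDerivWithin 2 φ (Icc 0 1) 1 = 0) :
    ∀ x ∈ Icc (0 : ℝ) 1, φ x = 0 := by
  have hud : UniqueDiffOn ℝ (Icc (0:ℝ) 1) := uniqueDiffOn_Icc one_pos
  have h0mem : (0:ℝ) ∈ Icc (0:ℝ) 1 := ⟨le_refl 0, zero_le_one⟩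
  have h1mem : (1:ℝ) ∈ Icc (0:ℝ) 1 := ⟨zero_le_one, le_refl 1⟩
  have hder : ∀ k : ℕ, k < 4 → ∀ x ∈ Icc (0:ℝ) 1,
      HasDerivWithinAt (iteratedDerivWithin k φ (Icc 0 1))
        (iteratedDerivWithin (k+1) φ (Icc 0 1) x) (Icc 0 1) x := by
    intro k hk x hx
    have hdiff : DifferentiableWithinAt ℝ (iteratedDerivWithin k φ (Icc 0 1)) (Icc 0 1) x :=
      hφ.differentiableOn_iteratedDerivWithin (by exact_mod_cast hk) hud x hx
    have h := hdiff.hasDerivWithinAt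
    rwa [← iteratedDerivWithin_succ] at h
  set f1 := iteratedDerivWithin 1 φ (Icc (0:ℝ) 1) with hf1def
  set f2 := iteratedDerivWithin 2 φ (Icc (0:ℝ) 1) with hf2def
  set f3 := iteratedDerivWithin 3 φ (Icc (0:ℝ) 1) with hf3def
  have hf0 : ∀ x ∈ Icc (0:ℝ) 1, HasDerivWithinAt φ (f1 x) (Icc 0 1) x := by
    intro x hx
    have h := hder 0 (by norm_num) x hx
    rwa [iteratedDerivWithin_zero] at h
  have hf1 : ∀ x ∈ Icc (0:ℝ) 1, HasDerivWithinAt f1 (f2 x) (Icc 0 1) x :=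
    fun x hx => hder 1 (by norm_num) x hx
  have hf2 : ∀ x ∈ Icc (0:ℝ) 1, HasDerivWithinAt f2 (f3 x) (Icc 0 1) x :=
    fun x hx => hder 2 (by norm_num) x hx
  have hf3 : ∀ x ∈ Icc (0:ℝ) 1, HasDerivWithinAt f3 (mu * φ x - (lam:ℂ) * f2 x) (Icc 0 1) x := by
    intro x hx
    have h := hder 3 (by norm_num) x hx
    have he : iteratedDerivWithin 4 φ (Icc 0 1) x = mu * φ x - (lam:ℂ) * f2 x := by
      have := hode x hx
      linear_combination this
    rwa [he] at h
  have e1 : f1 0 = 0 := by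
    rw [hf1def, iteratedDerivWithin_one]
    exact h0'
  by_cases hd : f3 0 = 0
  · -- compare with the zero solution
    have hz : ∀ x : ℝ, HasDerivAt (fun _ : ℝ => (0:ℂ)) 0 x := fun x => hasDerivAt_const x 0
    have hz3 : ∀ x : ℝ, HasDerivAt (fun _ : ℝ => (0:ℂ)) (mu * 0 - (lam:ℂ) * 0) x := by
      intro x
      simpa using hasDerivAt_const x (0:ℂ)
    have := uniq4 (lam:ℂ) mu hf0 hf1 hf2 hf3 hz hz hz hz3
      (by simpa using h0) (by simpa using e1) (by simpa using h0'') (by simpa using hd)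
    intro x hx
    exact (this x hx).1
  · exfalso
    have key : ∀ p0 p1 p2 p3 : ℝ → ℂ,
        (∀ x, HasDerivAt p0 (p1 x) x) → (∀ x, HasDerivAt p1 (p2 x) x) →
        (∀ x, HasDerivAt p2 (p3 x) x) →
        (∀ x, HasDerivAt p3 (mu * p0 x - (lam:ℂ) * p2 x) x) →
        p0 0 = 0 → p1 0 = 0 → p2 0 = 0 → p3 0 = 1 → p0 1 = 0 ∧ p2 1 = 0 := by
      intro p0 p1 p2 p3 hp0 hp1 hp2 hp3 q0 q1 q2 q3
      set d := f3 0 with hddef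
      have hg3 : ∀ x : ℝ, HasDerivAt (fun x => d * p3 x)
          (mu * (d * p0 x) - (lam:ℂ) * (d * p2 x)) x := by
        intro x
        have h := (hp3 x).const_mul d
        convert h using 1
        · rfl
        ring
      have hq := uniq4 (lam:ℂ) mu hf0 hf1 hf2 hf3
        (fun x => (hp0 x).const_mul d) (fun x => (hp1 x).const_mul d)
        (fun x => (hp2 x).const_mul d) hg3
        (by rw [h0, q0, mul_zero]) (by rw [e1, q1, mul_zero])
        (by rw [h0'', q2, mul_zero]) (by rw [q3, mul_one])
      obtain ⟨hA, hB⟩ := hq 1 h1mem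
      rw [h1] at hA
      rw [h1''] at hB
      constructor
      · rcases mul_eq_zero.mp hA.symm with h | h
        · exact absurd h hd
        · exact h
      · rcases mul_eq_zero.mp hB.symm with h | h
        · exact absurd h hd
        · exact h
    obtain ⟨DD, hDD⟩ := IsAlgClosed.exists_pow_nat_eq ((lam:ℂ)^2 + 4*mu) two_pos
    set a : ℂ := (-(lam:ℂ) + DD)/2 with hadef
    set b : ℂ := (-(lam:ℂ) - DD)/2 with hbdef
    have hsum : a + b = -(lam:ℂ) := by rw [hadef, hbdef]; ring
    have hprod : a * b = -mu := by
      rw [hadef, hbdef]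
      linear_combination (-(1:ℂ)/4) * hDD
    have haq : a^2 = mu - (lam:ℂ)*a := by linear_combination a*hsum - hprod
    have hbq : b^2 = mu - (lam:ℂ)*b := by linear_combination b*hsum - hprod
    have caseLinear : ∀ c : ℂ, c ≠ 0 → (lam:ℂ) = -c → mu = 0 → False := by
      intro c hc hl hm
      obtain ⟨ω, hω2⟩ := IsAlgClosed.exists_pow_nat_eq c two_pos
      have hωne : ω ≠ 0 := by
        intro h
        apply hc
        rw [← hω2, h]
        ring
      have hp0 : ∀ x : ℝ, HasDerivAt (fun x : ℝ => (Sf ω x - (x:ℂ))/c)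
          ((Cf ω x - 1)/c) x := by
        intro x
        exact ((hasDerivAt_Sf hωne x).sub (hasDerivAt_ofReal' x)).div_const c
      have hp1 : ∀ x : ℝ, HasDerivAt (fun x : ℝ => (Cf ω x - 1)/c) (Sf ω x) x := by
        intro x
        have h := ((hasDerivAt_Cf ω x).sub (hasDerivAt_const x (1:ℂ))).div_const c
        convert h using 1
        · rfl
        · rfl
        rw [hω2]
        field_simp
        ring
      have hp3 : ∀ x : ℝ, HasDerivAt (Cf ω)
          (mu * ((Sf ω x - (x:ℂ))/c) - (lam:ℂ) * (Sf ω x)) x := by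
        intro x
        have h := hasDerivAt_Cf ω x
        convert h using 1
        rw [hm, hl, hω2]
        ring
      obtain ⟨hA, hB⟩ := key _ _ _ _ hp0 hp1 (fun x => hasDerivAt_Sf hωne x) hp3
        (by simp [Sf_zero]) (by simp [Cf_zero]) (Sf_zero ω) (Cf_zero ω)
      rw [hB] at hA
      simp at hA
      exact hc hA
    by_cases hab : a = b
    · by_cases ha0 : a = 0
      · -- a = b = 0, lam = 0, mu = 0
        have hl0 : (lam:ℂ) = 0 := by linear_combination hsum - 2 * ha0 + hab
        have hm0 : mu = 0 := by linear_combination hprod - b * ha0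
        have hp3 : ∀ x : ℝ, HasDerivAt (fun _ : ℝ => (1:ℂ))
            (mu * ((x:ℂ) * (x:ℂ) * (x:ℂ)/6) - (lam:ℂ) * (x:ℂ)) x := by
          intro x
          have h := hasDerivAt_const x (1:ℂ)
          convert h using 1
          · rfl
          rw [hl0, hm0]
          ring
        have hp0 : ∀ x : ℝ, HasDerivAt (fun x : ℝ => (x:ℂ) * (x:ℂ) * (x:ℂ)/6)
            ((x:ℂ) * (x:ℂ)/2) x := by
          intro x
          have h := (((hasDerivAt_ofReal' x).mul (hasDerivAt_ofReal' x)).mul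
            (hasDerivAt_ofReal' x)).div_const 6
          convert h using 1
          · rfl
          · rfl
          simp only [Pi.mul_apply]
          ring
        have hp1 : ∀ x : ℝ, HasDerivAt (fun x : ℝ => (x:ℂ) * (x:ℂ)/2) ((x:ℂ)) x := by
          intro x
          have h := ((hasDerivAt_ofReal' x).mul (hasDerivAt_ofReal' x)).div_const 2
          convert h using 1
          · rfl
          · rfl
          ring
        obtain ⟨hA, _⟩ := key _ _ _ _ hp0 hp1 (fun x => hasDerivAt_ofReal' x) hp3
          (by norm_num) (by norm_num) (by norm_num) rfl
        norm_num at hA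
      · -- a = b ≠ 0
        obtain ⟨ω, hω2⟩ := IsAlgClosed.exists_pow_nat_eq a two_pos
        have hωne : ω ≠ 0 := by
          intro h
          apply ha0
          rw [← hω2, h]
          ring
        have hl2 : (lam:ℂ) = -(2*a) := by linear_combination hsum + hab
        have hm2 : mu = -(a^2) := by linear_combination hprod + a * hab
        have hp0 : ∀ x : ℝ, HasDerivAt (fun x : ℝ => ((x:ℂ) * Cf ω x - Sf ω x)/(2*a))
            ((x:ℂ) * Sf ω x / 2) x := by
          intro x
          have h := (((hasDerivAt_ofReal' x).mul (hasDerivAt_Cf ω x)).sub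
            (hasDerivAt_Sf hωne x)).div_const (2*a)
          convert h using 1
          · rfl
          · rfl
          rw [hω2]
          field_simp
          ring
        have hp1 : ∀ x : ℝ, HasDerivAt (fun x : ℝ => (x:ℂ) * Sf ω x / 2)
            ((Sf ω x + (x:ℂ) * Cf ω x)/2) x := by
          intro x
          have h := ((hasDerivAt_ofReal' x).mul (hasDerivAt_Sf hωne x)).div_const 2
          convert h using 1
          · rfl
          · rfl
          ring
        have hp2 : ∀ x : ℝ, HasDerivAt (fun x : ℝ => (Sf ω x + (x:ℂ) * Cf ω x)/2)
            (Cf ω x + a * ((x:ℂ) * Sf ω x) / 2) x := by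
          intro x
          have h := ((hasDerivAt_Sf hωne x).add
            ((hasDerivAt_ofReal' x).mul (hasDerivAt_Cf ω x))).div_const 2
          convert h using 1
          · rfl
          · rfl
          rw [hω2]
          ring
        have hp3 : ∀ x : ℝ, HasDerivAt (fun x : ℝ => Cf ω x + a * ((x:ℂ) * Sf ω x) / 2)
            (mu * (((x:ℂ) * Cf ω x - Sf ω x)/(2*a)) -
              (lam:ℂ) * ((Sf ω x + (x:ℂ) * Cf ω x)/2)) x := by
          intro x
          have h := (hasDerivAt_Cf ω x).add
            ((((hasDerivAt_ofReal' x).mul (hasDerivAt_Sf hωne x)).const_mul a).div_const 2)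
          convert h using 1
          · rfl
          · rfl
          rw [hm2, hl2, hω2]
          field_simp
          ring
        obtain ⟨hA, hB⟩ := key _ _ _ _ hp0 hp1 hp2 hp3
          (by simp [Sf_zero, Cf_zero]) (by simp [Sf_zero]) (by simp [Sf_zero, Cf_zero])
          (by simp [Sf_zero, Cf_zero])
        push_cast at hA hB
        have h2a : (2:ℂ) * a ≠ 0 := by simp [ha0]
        have hnum : (1:ℂ) * Cf ω 1 - Sf ω 1 = 0 := (div_eq_zero_iff.mp hA).resolve_right h2a
        have hnum2 : Sf ω 1 + (1:ℂ) * Cf ω 1 = 0 := by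
          rcases div_eq_zero_iff.mp hB with h | h
          · exact h
          · norm_num at h
        have hCf : Cf ω 1 = 0 := by linear_combination (hnum + hnum2)/2
        have hSf : Sf ω 1 = 0 := by linear_combination (hnum2 - hnum)/2
        have hc : Complex.exp (ω * 1) + Complex.exp (-ω * 1) = 0 := by
          have h := hCf
          unfold Cf at h
          linear_combination 2 * h
        have hs : Complex.exp (ω * 1) - Complex.exp (-ω * 1) = 0 := by
          have h := hSf
          unfold Sf at h
          have h2ω : (2:ℂ) * ω ≠ 0 := by simp [hωne]
          have h' := (div_eq_zero_iff.mp h).resolve_right h2ω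
          push_cast at h' ⊢
          exact h'
        have : Complex.exp (ω * 1) = 0 := by linear_combination (hc + hs)/2
        exact Complex.exp_ne_zero _ this
    · by_cases ha0 : a = 0
      · have hb0 : b ≠ 0 := fun h => hab (ha0.trans h.symm)
        have hm0 : mu = 0 := by linear_combination hprod - b * ha0
        have hlb : (lam:ℂ) = -b := by linear_combination hsum - ha0
        exact caseLinear b hb0 hlb hm0
      · by_cases hb0 : b = 0
        · have hm0 : mu = 0 := by linear_combination hprod - a * hb0
          have hla : (lam:ℂ) = -a := by linear_combination hsum - hb0
          exact caseLinear a ha0 hla hm0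
        · obtain ⟨ω, hω2⟩ := IsAlgClosed.exists_pow_nat_eq a two_pos
          obtain ⟨ν, hν2⟩ := IsAlgClosed.exists_pow_nat_eq b two_pos
          have hωne : ω ≠ 0 := fun h => ha0 (by rw [← hω2, h]; ring)
          have hνne : ν ≠ 0 := fun h => hb0 (by rw [← hν2, h]; ring)
          have habne : a - b ≠ 0 := sub_ne_zero.mpr hab
          have hp0 : ∀ x : ℝ, HasDerivAt (fun x : ℝ => (Sf ω x - Sf ν x)/(a-b))
              ((Cf ω x - Cf ν x)/(a-b)) x := fun x =>
            ((hasDerivAt_Sf hωne x).sub (hasDerivAt_Sf hνne x)).div_const (a-b)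
          have hp1 : ∀ x : ℝ, HasDerivAt (fun x : ℝ => (Cf ω x - Cf ν x)/(a-b))
              ((a * Sf ω x - b * Sf ν x)/(a-b)) x := by
            intro x
            have h := ((hasDerivAt_Cf ω x).sub (hasDerivAt_Cf ν x)).div_const (a-b)
            convert h using 1
            · rfl
            · rfl
            rw [hω2, hν2]
          have hp2 : ∀ x : ℝ, HasDerivAt (fun x : ℝ => (a * Sf ω x - b * Sf ν x)/(a-b))
              ((a * Cf ω x - b * Cf ν x)/(a-b)) x := fun x =>
            (((hasDerivAt_Sf hωne x).const_mul a).sub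
              ((hasDerivAt_Sf hνne x).const_mul b)).div_const (a-b)
          have hp3 : ∀ x : ℝ, HasDerivAt (fun x : ℝ => (a * Cf ω x - b * Cf ν x)/(a-b))
              (mu * ((Sf ω x - Sf ν x)/(a-b)) -
                (lam:ℂ) * ((a * Sf ω x - b * Sf ν x)/(a-b))) x := by
            intro x
            have h := (((hasDerivAt_Cf ω x).const_mul a).sub
              ((hasDerivAt_Cf ν x).const_mul b)).div_const (a-b)
            convert h using 1
            · rfl
            · rfl
            rw [hω2, hν2]
            linear_combination (-(Sf ω x)/(a-b)) * haq + (Sf ν x/(a-b)) * hbq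
          obtain ⟨hA, hB⟩ := key _ _ _ _ hp0 hp1 hp2 hp3
            (by simp [Sf_zero]) (by simp [Cf_zero]) (by simp [Sf_zero])
            (by rw [Cf_zero, Cf_zero]; field_simp)
          have n1 : Sf ω 1 - Sf ν 1 = 0 := (div_eq_zero_iff.mp hA).resolve_right habne
          have n2 : a * Sf ω 1 - b * Sf ν 1 = 0 := (div_eq_zero_iff.mp hB).resolve_right habne
          have hSω : Sf ω 1 = 0 := by
            have h3 : (a - b) * Sf ω 1 = 0 := by linear_combination n2 - b * n1
            exact (mul_eq_zero.mp h3).resolve_left habne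
          have hSν : Sf ν 1 = 0 := by linear_combination hSω - n1
          obtain ⟨j, hj⟩ := Sf_one_eq_zero hωne hSω
          obtain ⟨k, hk⟩ := Sf_one_eq_zero hνne hSν
          have haj : a = -(j:ℂ)^2 * (π:ℂ)^2 := by rw [← hω2]; exact hj
          have hbk : b = -(k:ℂ)^2 * (π:ℂ)^2 := by rw [← hν2]; exact hk
          have hjk : j ≠ k := by
            rintro rfl
            exact hab (haj.trans hbk.symm)
          apply hlam
          refine ⟨j, k, hjk, ?_⟩
          have hcast : ((lam:ℝ):ℂ) = (((j:ℝ)^2*π^2 + (k:ℝ)^2*π^2 : ℝ) : ℂ) := by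
            push_cast
            linear_combination hsum - haj - hbk
          exact_mod_cast hcast
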